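/- Let d ≥ 1, let x ∈ ℝ^d have summatory parameter x := x_1 + ⋯ + x_d ≠ 0, and let Q_x := −x·I + C_x. Then for every t ∈ ℝ, the matrix exponential satisfies exp(t·Q_x) = e^{−tx}·I + ((1 − e^{−tx})/x)·C_x. -/

import Mathlib

open Matrix

/-- `eqRows d x` is the `d × d` real matrix all of whose rows equal the row vector `x`. -/
def eqRows (d : ℕ) (x : Fin d → ℝ) : Matrix (Fin d) (Fin d) ℝ :=
  Matrix.of fun _ j => x j

/-- The equal-input generator `Q_x := −x·I + C_x`, where `x = ∑ᵢ xᵢ`. -/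
noncomputable def Qgen (d : ℕ) (x : Fin d → ℝ) : Matrix (Fin d) (Fin d) ℝ :=
  (-(∑ i, x i)) • (1 : Matrix (Fin d) (Fin d) ℝ) + eqRows d x

/-- In a real Banach algebra, if `A * A = c • A` with `c ≠ 0`, then
`exp A = 1 + ((e^c - 1)/c) • A`. -/
lemma exp_of_sq {𝔸 : Type*} [NormedRing 𝔸] [NormedAlgebra ℝ 𝔸] [CompleteSpace 𝔸]
    (A : 𝔸) (c : ℝ) (hc : c ≠ 0) (h : A * A = c • A) :
    NormedSpace.exp A = 1 + ((Real.exp c - 1) / c) • A := by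
  open NormedSpace in
  have hpow : ∀ n : ℕ, A ^ (n + 1) = c ^ n • A := by
    intro n
    induction n with
    | zero => simp
    | succ n ih =>
      rw [pow_succ, ih, smul_mul_assoc, h, smul_smul, pow_succ]
  have hsum : Summable fun n : ℕ => (Nat.factorial n : ℝ)⁻¹ • A ^ n := expSeries_summable' A
  have hshift : Summable fun n : ℕ => c ^ (n + 1) / (Nat.factorial (n + 1) : ℝ) :=
    (Real.summable_pow_div_factorial c).comp_injective (add_left_injective 1)
  have hsum2 : Summable fun n : ℕ => c ^ n / (Nat.factorial (n + 1) : ℝ) := by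
    have := hshift.div_const c
    refine this.congr fun n => ?_
    field_simp
    ring
  have key : (∑' n : ℕ, c ^ n / (Nat.factorial (n + 1) : ℝ)) = (Real.exp c - 1) / c := by
    rw [eq_div_iff hc]
    have h1 : Real.exp c = ∑' n : ℕ, c ^ n / (Nat.factorial n : ℝ) := by
      rw [Real.exp_eq_exp_ℝ, exp_eq_tsum_div]
    have h2 : (∑' n : ℕ, c ^ n / (Nat.factorial n : ℝ))
        = 1 + ∑' n : ℕ, c ^ (n + 1) / (Nat.factorial (n + 1) : ℝ) := by
      rw [Summable.tsum_eq_zero_add (Real.summable_pow_div_factorial c)]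
      simp
    rw [h1, h2, ← tsum_mul_right]
    rw [add_sub_cancel_left]
    exact tsum_congr fun n => by field_simp; ring
  rw [exp_eq_tsum ℝ]
  beta_reduce
  rw [Summable.tsum_eq_zero_add hsum]
  simp only [hpow, pow_zero, Nat.factorial_zero, Nat.cast_one, inv_one, one_smul, smul_smul]
  congr 1
  rw [← key, ← Summable.tsum_smul_const hsum2 A]
  exact tsum_congr fun n => by rw [div_eq_mul_inv, mul_comm]

lemma Qgen_sq (d : ℕ) (x : Fin d → ℝ) :
    Qgen d x * Qgen d x = (-(∑ i, x i)) • Qgen d x := by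
  have hC : eqRows d x * eqRows d x = (∑ i, x i) • eqRows d x := by
    ext i j
    simp [eqRows, Matrix.mul_apply, Finset.sum_mul]
  set s := ∑ i, x i
  simp only [Qgen, add_mul, mul_add, smul_mul_assoc, mul_smul_comm, one_mul, mul_one, hC,
    smul_add, smul_smul]
  ring_nf
  module

/-- for `x` with nonzero summatory parameter `x = ∑ᵢ xᵢ` and any `t ∈ ℝ`,
`exp(t·Q_x) = e^{−tx}·I + ((1 − e^{−tx})/x)·C_x`. -/
theorem stmt5 (d : ℕ) (hd : 1 ≤ d) (x : Fin d → ℝ) (hx : ∑ i, x i ≠ 0) (t : ℝ) :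
    NormedSpace.exp (t • Qgen d x) =
      Real.exp (-(t * ∑ i, x i)) • (1 : Matrix (Fin d) (Fin d) ℝ) +
        ((1 - Real.exp (-(t * ∑ i, x i))) / (∑ i, x i)) • eqRows d x := by
  letI : NormedRing (Matrix (Fin d) (Fin d) ℝ) := Matrix.linftyOpNormedRing
  letI : NormedAlgebra ℝ (Matrix (Fin d) (Fin d) ℝ) := Matrix.linftyOpNormedAlgebra
  set s := ∑ i, x i with hs
  rcases eq_or_ne t 0 with rfl | ht
  · simp [NormedSpace.exp_zero]
  · have hc : -(t * s) ≠ 0 := by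
      simp only [neg_ne_zero]
      exact mul_ne_zero ht hx
    have hsq : (t • Qgen d x) * (t • Qgen d x) = (-(t * s)) • (t • Qgen d x) := by
      rw [smul_mul_assoc, mul_smul_comm, Qgen_sq, smul_smul, smul_smul, smul_smul]
      congr 1
      ring
    erw [exp_of_sq _ _ hc hsq]
    rw [smul_smul]
    have hcoef : (Real.exp (-(t * s)) - 1) / (-(t * s)) * t = (1 - Real.exp (-(t * s))) / s := by
      field_simp
      ring
    rw [hcoef]
    simp only [Qgen, smul_add, smul_smul]
    rw [← add_assoc]
    congr 1
    have h2 : (1 - Real.exp (-(t * s))) / s * -∑ i, x i = Real.exp (-(t * s)) - 1 := by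
      rw [← hs]; field_simp; ring
    rw [h2, sub_smul, one_smul]
    abel
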